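/- The map w ↦ (2iw₂, −w₁ − w₂²) is a bijection from 𝕃₂ onto the symmetrized bidisc 𝔾₂ = {(λ₁+λ₂, λ₁λ₂) : λ₁, λ₂ ∈ 𝔻}. -/

import Mathlib

open Complex

/-- The Lie ball `L₂ ⊂ ℂ²` (as pairs). -/
def L2 : Set (ℂ × ℂ) :=
  {z | Real.sqrt (‖z.1‖ ^ 2 + ‖z.2‖ ^ 2) < 1 ∧
    2 * (‖z.1‖ ^ 2 + ‖z.2‖ ^ 2) <
      1 + ‖z.1 ^ 2 + z.2 ^ 2‖ ^ 2}

/-- `𝕃₂ = Λ₂(L₂)` where `Λ₂(z₁,z₂) = (z₁², z₂)`. -/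
def bbL2 : Set (ℂ × ℂ) := (fun z : ℂ × ℂ => (z.1 ^ 2, z.2)) '' L2

/-- The symmetrized bidisc `𝔾₂`. -/
def G2 : Set (ℂ × ℂ) :=
  {w | ∃ l₁ l₂ : ℂ, ‖l₁‖ < 1 ∧ ‖l₂‖ < 1 ∧
    w = (l₁ + l₂, l₁ * l₂)}

lemma key_real (A B : ℝ) (_hA : 0 ≤ A) (_hB : 0 ≤ B) :
    (A + B < 2 ∧ A + B < 1 + A * B) ↔ (A < 1 ∧ B < 1) := by
  constructor
  · rintro ⟨h1, h2⟩
    constructor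
    · by_contra h; push_neg at h; nlinarith
    · by_contra h; push_neg at h; nlinarith
  · rintro ⟨h1, h2⟩
    constructor
    · linarith
    · nlinarith [mul_pos (sub_pos.2 h1) (sub_pos.2 h2)]

lemma mem_L2_iff (z₁ z₂ : ℂ) :
    (z₁, z₂) ∈ L2 ↔ ‖z₁ + I * z₂‖ < 1 ∧ ‖I * z₂ - z₁‖ < 1 := by
  have hsum : normSq (z₁ + I * z₂) + normSq (I * z₂ - z₁)
      = 2 * (normSq z₁ + normSq z₂) := by
    simp [Complex.normSq_apply, Complex.add_re, Complex.add_im, Complex.sub_re,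
      Complex.sub_im, Complex.mul_re, Complex.mul_im, Complex.I_re, Complex.I_im]
    ring
  have hmul : normSq (z₁ + I * z₂) * normSq (I * z₂ - z₁) = normSq (z₁ ^ 2 + z₂ ^ 2) := by
    rw [← Complex.normSq_mul]
    have : (z₁ + I * z₂) * (I * z₂ - z₁) = -(z₁ ^ 2 + z₂ ^ 2) := by
      linear_combination z₂ ^ 2 * Complex.I_sq
    rw [this, Complex.normSq_neg]
  have h1 : ‖z₁ + I * z₂‖ < 1 ↔ normSq (z₁ + I * z₂) < 1 := by
    rw [← Complex.sq_norm]
    exact (pow_lt_one_iff_of_nonneg (norm_nonneg _) two_ne_zero).symm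
  have h2 : ‖I * z₂ - z₁‖ < 1 ↔ normSq (I * z₂ - z₁) < 1 := by
    rw [← Complex.sq_norm]
    exact (pow_lt_one_iff_of_nonneg (norm_nonneg _) two_ne_zero).symm
  have hL : (z₁, z₂) ∈ L2 ↔
      (normSq (z₁ + I * z₂) + normSq (I * z₂ - z₁) < 2 ∧
       normSq (z₁ + I * z₂) + normSq (I * z₂ - z₁) <
         1 + normSq (z₁ + I * z₂) * normSq (I * z₂ - z₁)) := by
    simp only [L2, Set.mem_setOf_eq, Complex.sq_norm, hsum, hmul]
    rw [Real.sqrt_lt' one_pos]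
    constructor
    · rintro ⟨a, b⟩; constructor <;> linarith
    · rintro ⟨a, b⟩; constructor <;> linarith
  rw [hL, key_real _ _ (normSq_nonneg _) (normSq_nonneg _), h1, h2]

/-- The map `w ↦ (2iw₂, −w₁ − w₂²)` is a bijection from `𝕃₂` onto `𝔾₂`. -/
theorem stmt_9 :
    Set.BijOn (fun w : ℂ × ℂ => (2 * I * w.2, -w.1 - w.2 ^ 2)) bbL2 G2 := by
  refine ⟨?_, ?_, ?_⟩
  · rintro w ⟨z, hz, rfl⟩
    obtain ⟨z₁, z₂⟩ := z
    obtain ⟨ha, hb⟩ := (mem_L2_iff z₁ z₂).1 hz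
    refine ⟨z₁ + I * z₂, I * z₂ - z₁, ha, hb, ?_⟩
    simp only [Prod.mk.injEq]
    constructor
    · ring
    · linear_combination -z₂ ^ 2 * Complex.I_sq
  · intro w _ w' _ h
    simp only [Prod.mk.injEq] at h
    obtain ⟨h1, h2⟩ := h
    have h2' : w.2 = w'.2 := by
      exact mul_left_cancel₀ (mul_ne_zero two_ne_zero Complex.I_ne_zero) h1
    have h1' : w.1 = w'.1 := by
      linear_combination -h2 - (w.2 + w'.2) * h2'
    exact Prod.ext_iff.2 ⟨h1', h2'⟩
  · rintro ⟨s, p⟩ ⟨l₁, l₂, h1, h2, heq⟩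
    set z₁ : ℂ := (l₁ - l₂) / 2 with hz₁
    set z₂ : ℂ := -I * (l₁ + l₂) / 2 with hz₂
    have hl1 : z₁ + I * z₂ = l₁ := by
      rw [hz₁, hz₂]; linear_combination (-(l₁ + l₂) / 2) * Complex.I_sq
    have hl2 : I * z₂ - z₁ = l₂ := by
      rw [hz₁, hz₂]; linear_combination (-(l₁ + l₂) / 2) * Complex.I_sq
    have hzL : (z₁, z₂) ∈ L2 := (mem_L2_iff z₁ z₂).2 (by rw [hl1, hl2]; exact ⟨h1, h2⟩)
    refine ⟨(z₁ ^ 2, z₂), ⟨(z₁, z₂), hzL, rfl⟩, ?_⟩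
    simp only [Prod.mk.injEq] at heq ⊢
    obtain ⟨rfl, rfl⟩ := heq
    constructor
    · rw [hz₂]; linear_combination (-(l₁ + l₂)) * Complex.I_sq
    · rw [hz₁, hz₂]; linear_combination (-(l₁ + l₂) ^ 2 / 4) * Complex.I_sq
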